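/- Let M = (Q, A, τ) be an invertible Mealy automaton and let u ∈ A* be a nonempty word. Then the set of all finite prefixes of sequences in the orbit P_M · u^ω = { s·u^ω : s ∈ Q* } is a regular language over A (recognized by a deterministic finite automaton). -/
import Mathlib


namespace AutGrp

/-- A Mealy automaton with state set `Q` and alphabet `A`:
`step q a = (q · a, q @ a)` (output letter, next state). -/
structure Mealy (Q A : Type*) where
  step : Q → A → A × Q

namespace Mealy

variable {Q A : Type*}

/-- The output letter `q · a`. -/
def o (M : Mealy Q A) (q : Q) (a : A) : A := (M.step q a).1

/-- The next state `q @ a`. -/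
def t (M : Mealy Q A) (q : Q) (a : A) : Q := (M.step q a).2

/-- Action of a single state on a word of letters: `q · w`. -/
def actA (M : Mealy Q A) : Q → List A → List A
  | _, [] => []
  | q, a :: w => M.o q a :: M.actA (M.t q a) w

/-- State reached from `q` after reading the word `w`: `q @ w`. -/
def stA (M : Mealy Q A) : Q → List A → Q
  | q, [] => q
  | q, a :: w => M.stA (M.t q a) w

/-- Action of a word of states on a word of letters: `s · u` (rightmost state acts first). -/
def actW (M : Mealy Q A) : List Q → List A → List A
  | [], u => u
  | q :: s, u => M.actA q (M.actW s u)

/-- Word of states reached after reading `u`: `s @ u`. -/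
def stW (M : Mealy Q A) : List Q → List A → List Q
  | [], _ => []
  | q :: s, u => M.stA q (M.actW s u) :: M.stW s u

/-- `M` is invertible if each state acts on `A` by a bijection. -/
def Invertible (M : Mealy Q A) : Prop := ∀ q : Q, Function.Bijective (M.o q)

/-- `M` is reversible if each letter acts on `Q` by a bijection. -/
def Reversible (M : Mealy Q A) : Prop := ∀ a : A, Function.Bijective (fun q => M.t q a)

theorem actA_append (M : Mealy Q A) (q : Q) (x y : List A) :
    M.actA q (x ++ y) = M.actA q x ++ M.actA (M.stA q x) y := by
  induction x generalizing q with
  | nil => simp [actA, stA]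
  | cons a w ih => simp [actA, stA, ih]

theorem stA_append (M : Mealy Q A) (q : Q) (x y : List A) :
    M.stA q (x ++ y) = M.stA (M.stA q x) y := by
  induction x generalizing q with
  | nil => simp [stA]
  | cons a w ih => simp [stA, ih]

theorem actW_append_states (M : Mealy Q A) (s u : List Q) (w : List A) :
    M.actW (s ++ u) w = M.actW s (M.actW u w) := by
  induction s with
  | nil => simp [actW]
  | cons q s ih => simp [actW, ih]

theorem actW_append (M : Mealy Q A) (s : List Q) (x y : List A) :
    M.actW s (x ++ y) = M.actW s x ++ M.actW (M.stW s x) y := by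
  induction s with
  | nil => simp [actW, stW]
  | cons q s ih => simp [actW, stW, ih, actA_append]

theorem stW_append (M : Mealy Q A) (s : List Q) (x y : List A) :
    M.stW s (x ++ y) = M.stW (M.stW s x) y := by
  induction s with
  | nil => simp [stW]
  | cons q s ih => simp [stW, actW, ih, actW_append, stA_append]

theorem actW_stW_congr (M : Mealy Q A) {p p' : List Q}
    (h : ∀ w : List A, M.actW p w = M.actW p' w) (u w : List A) :
    M.actW (M.stW p u) w = M.actW (M.stW p' u) w := by
  have h1 := M.actW_append p u w
  have h2 := M.actW_append p' u w
  rw [h u, h (u ++ w)] at h1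
  rw [h1] at h2
  exact List.append_cancel_left h2

/-- The congruence `~Q` on the free monoid `Q*`: two words of states are equivalent
iff they act identically on `A*`. -/
def conQ (M : Mealy Q A) : Con (FreeMonoid Q) where
  r s u := ∀ w : List A, M.actW s.toList w = M.actW u.toList w
  iseqv := ⟨fun _ _ => rfl, fun h w => (h w).symm, fun h1 h2 w => (h1 w).trans (h2 w)⟩
  mul' := by
    intro a b c d h1 h2 w
    simp only [FreeMonoid.toList_mul, actW_append_states]
    rw [h2 w, h1 (M.actW d.toList w)]

/-- The congruence `~A` on the free monoid `A*`: `u ~A v` iff `s @ u = s @ v` for all `s ∈ Q*`. -/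
def conA (M : Mealy Q A) : Con (FreeMonoid A) where
  r u v := ∀ s : List Q, M.stW s u.toList = M.stW s v.toList
  iseqv := ⟨fun _ _ => rfl, fun h s => (h s).symm, fun h1 h2 s => (h1 s).trans (h2 s)⟩
  mul' := by
    intro a b c d h1 h2 s
    simp only [FreeMonoid.toList_mul, stW_append]
    rw [h1 s, h2 (M.stW s b.toList)]

/-- The congruence `~D` on the free monoid `A*`: `u ~D v` iff `s @ u ~Q s @ v` for all `s ∈ Q*`. -/
def conD (M : Mealy Q A) : Con (FreeMonoid A) where
  r u v := ∀ (s : List Q) (w : List A),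
    M.actW (M.stW s u.toList) w = M.actW (M.stW s v.toList) w
  iseqv := ⟨fun _ _ _ => rfl, fun h s w => (h s w).symm,
    fun h1 h2 s w => (h1 s w).trans (h2 s w)⟩
  mul' := by
    intro a b c d h1 h2 s w
    simp only [FreeMonoid.toList_mul, stW_append]
    calc M.actW (M.stW (M.stW s a.toList) c.toList) w
        = M.actW (M.stW (M.stW s b.toList) c.toList) w :=
          M.actW_stW_congr (h1 s) c.toList w
      _ = M.actW (M.stW (M.stW s b.toList) d.toList) w := h2 _ w

/-- The automaton semigroup (monoid) `P_M = Q* / ~Q`. -/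
abbrev PM (M : Mealy Q A) : Type _ := M.conQ.Quotient

/-- The dual automaton semigroup (monoid) `D_M = A* / ~A`. -/
abbrev DM (M : Mealy Q A) : Type _ := M.conA.Quotient

/-- The monoid `D'_M = A* / ~D`. -/
abbrev DM' (M : Mealy Q A) : Type _ := M.conD.Quotient

/-- The class in `P_M` of a word of states. -/
def PMmk (M : Mealy Q A) (s : List Q) : M.PM := M.conQ.mk' (FreeMonoid.ofList s)

/-- The class in `D_M` of a word of letters. -/
def DMmk (M : Mealy Q A) (u : List A) : M.DM := M.conA.mk' (FreeMonoid.ofList u)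

/-- The class in `D'_M` of a word of letters. -/
def DM'mk (M : Mealy Q A) (u : List A) : M.DM' := M.conD.mk' (FreeMonoid.ofList u)

/-- `M` is self-invertible if `P_M` is a group. -/
def SelfInvertible (M : Mealy Q A) : Prop :=
  ∀ x : M.PM, ∃ y : M.PM, x * y = 1 ∧ y * x = 1

/-- The enriched automaton of an invertible automaton: states `Q ⊕ Q`, where `Sum.inl q` is `q`
and `Sum.inr q` is the formal inverse `q⁻¹`; `τ̃(q,a) = τ(q,a)` and
`τ̃(q⁻¹, q·a) = (a, (q@a)⁻¹)`. -/
noncomputable def enriched [Nonempty A] (M : Mealy Q A) : Mealy (Q ⊕ Q) A where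
  step := fun p b =>
    match p with
    | Sum.inl q => (M.o q b, Sum.inl (M.t q b))
    | Sum.inr q =>
        (Function.invFun (M.o q) b, Sum.inr (M.t q (Function.invFun (M.o q) b)))

/-- The monoid `Δ_M` presented by generators `Q ⊔ A` and relations `q a = (q·a)(q@a)`. -/
def deltaCon (M : Mealy Q A) : Con (FreeMonoid (Q ⊕ A)) :=
  conGen (fun w₁ w₂ => ∃ (q : Q) (a : A),
    w₁ = FreeMonoid.of (Sum.inl q) * FreeMonoid.of (Sum.inr a) ∧
    w₂ = FreeMonoid.of (Sum.inr (M.o q a)) * FreeMonoid.of (Sum.inl (M.t q a)))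

end Mealy

/-- Evaluation of a positive word in the letters `y` (for `true`) and `z` (for `false`). -/
def evalPair {S : Type*} [Monoid S] (y z : S) : List Bool → S
  | [] => 1
  | b :: l => (bif b then y else z) * evalPair y z l

/-- `y` and `z` freely generate a free subsemigroup of rank two: distinct nonempty
positive words in `y, z` represent distinct elements. -/
def IsFreePair {S : Type*} [Monoid S] (y z : S) : Prop :=
  ∀ l₁ l₂ : List Bool, l₁ ≠ [] → l₂ ≠ [] →
    evalPair y z l₁ = evalPair y z l₂ → l₁ = l₂

/-- `x` has infinite order: `{x, x², x³, …}` is infinite. -/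
def InfiniteOrder {S : Type*} [Monoid S] (x : S) : Prop :=
  (Set.range fun n : ℕ => x ^ (n + 1)).Infinite

/-- The length-`n` prefix of a sequence. -/
def seqTake {A : Type*} (ξ : ℕ → A) (n : ℕ) : List A := (List.range n).map ξ

/-- The `n`-th power `u^n` of a finite word. -/
def wpow {A : Type*} (u : List A) : ℕ → List A
  | 0 => []
  | n + 1 => u ++ wpow u n

/-- The eventually periodic sequence `u v v v ⋯`. -/
noncomputable def prePeriodic {A : Type*} [Nonempty A] (u v : List A) : ℕ → A :=
  fun n => if n < u.length then u.getD n (Classical.arbitrary A)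
    else v.getD ((n - u.length) % v.length) (Classical.arbitrary A)

/-- The periodic sequence `u^ω = u u u ⋯`. -/
noncomputable def periodic {A : Type*} [Nonempty A] (u : List A) : ℕ → A :=
  prePeriodic [] u

namespace Mealy

/-- The action of a word of states on a sequence: `s · ξ` is the sequence whose
length-`n` prefix is `s · (length-`n` prefix of `ξ`)`. -/
noncomputable def actSeq {Q A : Type*} [Nonempty A] (M : Mealy Q A)
    (s : List Q) (ξ : ℕ → A) : ℕ → A :=
  fun n => (M.actW s (seqTake ξ (n + 1))).getD n (Classical.arbitrary A)

/-- The language of all prefixes of the orbit of `a^ω` under `P_M`. -/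
def Lan {Q A : Type*} (M : Mealy Q A) (a : A) : Set (List A) :=
  {v | ∃ (k : ℕ) (s : List Q), v = M.actW s (List.replicate k a)}

/-- The degree of `v` in `Lan(a)`: the number of letters `b` with `v b ∈ Lan(a)`. -/
noncomputable def deg {Q A : Type*} (M : Mealy Q A) (a : A) (v : List A) : ℕ :=
  {b : A | v ++ [b] ∈ M.Lan a}.ncard

end Mealy

/-- A language is regular if it is recognized by a deterministic finite automaton. -/
def IsRegular {A : Type*} (L : Set (List A)) : Prop :=
  ∃ (σ : Type) (_ : Fintype σ) (dfa : DFA A σ), ∀ w : List A, w ∈ dfa.accepts ↔ w ∈ L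


section Stmt16Aux

variable {Q A : Type*}

theorem wpow_succ' {α : Type*} (s : List α) (k : ℕ) : wpow s (k + 1) = wpow s k ++ s := by
  induction k with
  | zero => simp [wpow]
  | succ k ih =>
    show s ++ wpow s (k + 1) = wpow s (k + 1) ++ s
    conv_lhs => rw [ih]
    show s ++ (wpow s k ++ s) = (s ++ wpow s k) ++ s
    rw [List.append_assoc]

namespace Mealy

theorem length_actA (M : Mealy Q A) (q : Q) (l : List A) :
    (M.actA q l).length = l.length := by
  induction l generalizing q with
  | nil => simp [actA]
  | cons a w ih => simp [actA, ih]

theorem length_actW (M : Mealy Q A) (s : List Q) (l : List A) :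
    (M.actW s l).length = l.length := by
  induction s with
  | nil => simp [actW]
  | cons q s ih => simp [actW, length_actA, ih]

theorem actW_nil (M : Mealy Q A) (s : List Q) : M.actW s ([] : List A) = [] := by
  have := M.length_actW s []
  simpa [List.length_eq_zero_iff] using this

theorem actA_injective (M : Mealy Q A) (h : M.Invertible) (q : Q) :
    Function.Injective (M.actA q) := by
  intro l l' e
  induction l generalizing q l' with
  | nil =>
    cases l' with
    | nil => rfl
    | cons b w => simp [actA] at e
  | cons a w ih =>
    cases l' with
    | nil => simp [actA] at e
    | cons b w' =>
      simp only [actA, List.cons.injEq] at e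
      obtain ⟨e1, e2⟩ := e
      have hab : a = b := (h q).1 e1
      subst hab
      rw [ih (M.t q a) e2]

theorem actW_injective (M : Mealy Q A) (h : M.Invertible) (s : List Q) :
    Function.Injective (M.actW s) := by
  induction s with
  | nil => exact fun a b e => e
  | cons q s ih => exact fun a b e => ih (M.actA_injective h q e)

theorem stW_append_states (M : Mealy Q A) (α β : List Q) (y : List A) :
    M.stW (α ++ β) y = M.stW α (M.actW β y) ++ M.stW β y := by
  induction α with
  | nil => simp [stW]
  | cons q α ih => simp [stW, actW_append_states, ih]

theorem actW_wpow_succ (M : Mealy Q A) (s : List Q) (k : ℕ) (y : List A) :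
    M.actW (wpow s (k + 1)) y = M.actW s (M.actW (wpow s k) y) :=
  M.actW_append_states s (wpow s k) y

theorem actW_wpow (M : Mealy Q A) (s : List Q) (k : ℕ) (y : List A) :
    M.actW (wpow s k) y = (M.actW s)^[k] y := by
  induction k generalizing y with
  | zero => rfl
  | succ k ih => rw [actW_wpow_succ, ih, Function.iterate_succ_apply']

theorem exists_wpow_id (M : Mealy Q A) [Finite A] (h : M.Invertible) (s : List Q) (N : ℕ) :
    ∃ c, 1 ≤ c ∧ ∀ y : List A, y.length ≤ N → M.actW (wpow s c) y = y := by
  haveI : Finite {l : List A // l.length ≤ N} := (List.finite_length_le A N).to_subtype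
  set f : {l : List A // l.length ≤ N} → {l : List A // l.length ≤ N} :=
    fun v => ⟨M.actW s v.1, by rw [length_actW]; exact v.2⟩ with hf
  have hfinj : Function.Injective f := by
    intro v v' e
    exact Subtype.ext (M.actW_injective h s (congrArg Subtype.val e))
  have hval : ∀ (k : ℕ) (v : {l : List A // l.length ≤ N}),
      (f^[k] v).1 = (M.actW s)^[k] v.1 := by
    intro k
    induction k with
    | zero => intro v; rfl
    | succ k ih =>
      intro v
      rw [Function.iterate_succ_apply', Function.iterate_succ_apply']
      show M.actW s (f^[k] v).1 = _
      rw [ih]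
  obtain ⟨i, j, hne, hij⟩ :=
    Finite.exists_ne_map_eq_of_infinite (fun k : ℕ => f^[k])
  rcases Nat.lt_or_ge i j with hlt | hge
  · refine ⟨j - i, by omega, ?_⟩
    intro y hy
    have hiter : f^[j - i] ⟨y, hy⟩ = ⟨y, hy⟩ := by
      have hinj : Function.Injective (f^[i]) := Function.Injective.iterate hfinj i
      apply hinj
      have : f^[i + (j - i)] ⟨y, hy⟩ = f^[j] ⟨y, hy⟩ := by rw [show i + (j - i) = j by omega]
      rw [Function.iterate_add_apply] at this
      rw [this, ← hij]
    have := congrArg Subtype.val hiter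
    rw [hval] at this
    rw [actW_wpow, this]
  · have hlt : j < i := by omega
    refine ⟨i - j, by omega, ?_⟩
    intro y hy
    have hiter : f^[i - j] ⟨y, hy⟩ = ⟨y, hy⟩ := by
      have hinj : Function.Injective (f^[j]) := Function.Injective.iterate hfinj j
      apply hinj
      have : f^[j + (i - j)] ⟨y, hy⟩ = f^[i] ⟨y, hy⟩ := by rw [show j + (i - j) = i by omega]
      rw [Function.iterate_add_apply] at this
      rw [this, hij]
    have := congrArg Subtype.val hiter
    rw [hval] at this
    rw [actW_wpow, this]

end Mealy

end Stmt16Aux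
section Stmt16Aux2

variable {Q A : Type*}

@[simp] theorem length_seqTake (ξ : ℕ → A) (n : ℕ) : (seqTake ξ n).length = n := by
  simp [seqTake]

theorem seqTake_succ (ξ : ℕ → A) (n : ℕ) : seqTake ξ (n + 1) = seqTake ξ n ++ [ξ n] := by
  simp [seqTake, List.range_succ]

theorem seqTake_add (ξ : ℕ → A) (a b : ℕ) :
    seqTake ξ (a + b) = seqTake ξ a ++ (List.range b).map (fun i => ξ (a + i)) := by
  simp [seqTake, List.range_add, Function.comp]

section PT
variable [Nonempty A]

/-- The length-`n` prefix of `u^ω`. -/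
noncomputable def ptake (u : List A) (n : ℕ) : List A := seqTake (periodic u) n

@[simp] theorem length_ptake (u : List A) (n : ℕ) : (ptake u n).length = n :=
  length_seqTake _ _

theorem periodic_apply (u : List A) (n : ℕ) :
    periodic u n = u.getD (n % u.length) (Classical.arbitrary A) := by
  simp [periodic, prePeriodic]

theorem seqTake_periodic_self (u : List A) : seqTake (periodic u) u.length = u := by
  apply List.ext_getElem (by simp)
  intro i h1 h2
  simp only [seqTake, List.getElem_map, List.getElem_range]
  rw [periodic_apply, Nat.mod_eq_of_lt (by simpa using h2), List.getD_eq_getElem u _ h2]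

theorem ptake_block (u : List A) (k : ℕ) : ptake u (u.length + k) = u ++ ptake u k := by
  rw [ptake, seqTake_add, seqTake_periodic_self]
  congr 1
  rw [ptake, seqTake]
  apply List.map_congr_left
  intro i _
  rw [periodic_apply, periodic_apply, Nat.add_mod_left]

theorem ptake_split (u : List A) (n m : ℕ) :
    ptake u (n + m) = ptake u n ++ (List.range m).map (fun i => periodic u (n + i)) :=
  seqTake_add _ _ _

end PT

namespace Mealy

theorem seqTake_actSeq [Nonempty A] (M : Mealy Q A) (s : List Q) (ξ : ℕ → A) (n : ℕ) :
    seqTake (M.actSeq s ξ) n = M.actW s (seqTake ξ n) := by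
  induction n with
  | zero => simp [seqTake, actW_nil]
  | succ n ih =>
    rw [seqTake_succ, seqTake_succ, actW_append, ← ih]
    congr 1
    have hl : (M.actW (M.stW s (seqTake ξ n)) [ξ n]).length = 1 := by
      rw [length_actW]; rfl
    obtain ⟨a, ha⟩ := List.length_eq_one_iff.mp hl
    rw [ha]
    have : M.actSeq s ξ n = a := by
      rw [Mealy.actSeq]
      have hsplit : M.actW s (seqTake ξ (n + 1))
          = M.actW s (seqTake ξ n) ++ [a] := by
        rw [seqTake_succ, actW_append, ha]
      rw [hsplit]
      have hlen : (M.actW s (seqTake ξ n)).length = n := by rw [length_actW]; simp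
      rw [List.getD_eq_getElem _ _ (by simp [hlen])]
      rw [List.getElem_append_right (by omega)]
      simp [hlen]
    rw [this]

section LF
variable [Nonempty A]

/-- The prefix language of the orbit of `u^ω`. -/
def Lset (M : Mealy Q A) (u : List A) : Set (List A) :=
  {w | ∃ s : List Q, w = M.actW s (ptake u w.length)}

/-- Left quotient (follower set) of `Lset` at `w`. -/
def Fol (M : Mealy Q A) (u : List A) (w : List A) : Set (List A) :=
  {x | w ++ x ∈ M.Lset u}

theorem actW_ptake_mem (M : Mealy Q A) (s : List Q) (u : List A) (n : ℕ) :
    M.actW s (ptake u n) ∈ M.Lset u :=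
  ⟨s, by rw [length_actW, length_ptake]⟩

theorem ptake_mem (M : Mealy Q A) (u : List A) (n : ℕ) : ptake u n ∈ M.Lset u :=
  M.actW_ptake_mem [] u n

theorem Lset_prefix (M : Mealy Q A) {u w x : List A} (hx : w ++ x ∈ M.Lset u) :
    w ∈ M.Lset u := by
  obtain ⟨s, hs⟩ := hx
  rw [List.length_append] at hs
  rw [ptake_split u w.length x.length, actW_append] at hs
  have hlen : w.length = (M.actW s (ptake u w.length)).length := by
    rw [length_actW, length_ptake]
  exact ⟨s, (List.append_inj hs hlen).1⟩

/-- Key translation lemma: follower sets of words in the same level of `Lset`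
are injective images of each other. -/
theorem fol_translate [Finite A] (M : Mealy Q A) (h : M.Invertible) (u : List A)
    (s : List Q) (n : ℕ) :
    M.Fol u (M.actW s (ptake u n)) = (M.actW (M.stW s (ptake u n))) '' M.Fol u (ptake u n) := by
  have lw : (M.actW s (ptake u n)).length = n := by rw [length_actW, length_ptake]
  ext x
  constructor
  · intro hx
    obtain ⟨s₁, hs₁⟩ := hx
    rw [List.length_append, lw] at hs₁
    -- hs₁ : actW s (ptake u n) ++ x = actW s₁ (ptake u (n + x.length))
    obtain ⟨c, hc1, hc⟩ := M.exists_wpow_id h s (n + x.length)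
    obtain ⟨k, rfl⟩ : ∃ k, c = k + 1 := ⟨c - 1, by omega⟩
    set sb := wpow s k with hsb
    have hcs : wpow s (k + 1) = s ++ sb := rfl
    have hcs' : wpow s (k + 1) = sb ++ s := wpow_succ' s k
    have hsbw : M.actW sb (M.actW s (ptake u n)) = ptake u n := by
      rw [← actW_append_states, ← hcs']
      exact hc _ (by rw [length_ptake]; omega)
    refine ⟨M.actW (M.stW sb (M.actW s (ptake u n))) x, ?_, ?_⟩
    · -- membership : ptake u n ++ _ ∈ Lset
      refine ⟨sb ++ s₁, ?_⟩
      rw [List.length_append, length_ptake, length_actW,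
        actW_append_states, ← hs₁, actW_append, hsbw]
    · -- actW t (...) = x
      have hWX : M.actW (wpow s (k + 1)) (M.actW s (ptake u n) ++ x) = M.actW s (ptake u n) ++ x :=
        hc _ (by rw [List.length_append, lw])
      rw [actW_append] at hWX
      have h1 : M.actW (wpow s (k + 1)) (M.actW s (ptake u n)) = M.actW s (ptake u n) :=
        hc _ (by omega)
      rw [h1] at hWX
      have hcancel := List.append_cancel_left hWX
      have h2 : M.stW (wpow s (k + 1)) (M.actW s (ptake u n))
          = M.stW s (ptake u n) ++ M.stW sb (M.actW s (ptake u n)) := by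
        rw [hcs, stW_append_states, hsbw]
      rw [h2, actW_append_states] at hcancel
      exact hcancel
  · rintro ⟨x', hx', rfl⟩
    obtain ⟨s₂, hs₂⟩ := hx'
    rw [List.length_append, length_ptake] at hs₂
    refine ⟨s ++ s₂, ?_⟩
    rw [List.length_append, lw, length_actW, actW_append_states, ← hs₂, actW_append]

theorem fol_step_subset [Nonempty A] (M : Mealy Q A) (u : List A) (n : ℕ) :
    M.Fol u (ptake u (n + u.length)) ⊆ M.Fol u (ptake u n) := by
  intro x hx
  obtain ⟨s₁, hs₁⟩ := hx
  rw [List.length_append, length_ptake] at hs₁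
  have e1 : ptake u (n + u.length) = u ++ ptake u n := by
    rw [Nat.add_comm, ptake_block]
  have e2 : ptake u (n + u.length + x.length) = u ++ ptake u (n + x.length) := by
    rw [show n + u.length + x.length = u.length + (n + x.length) by omega, ptake_block]
  rw [e1, e2, actW_append, List.append_assoc] at hs₁
  have hlen : u.length = (M.actW s₁ u).length := by rw [length_actW]
  have := (List.append_inj hs₁ hlen).2
  refine ⟨M.stW s₁ u, ?_⟩
  rw [List.length_append, length_ptake]
  exact this

end LF

end Mealy

end Stmt16Aux2
section Stmt16Aux3

variable {Q A : Type*} [Fintype A] [Nonempty A]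

namespace Mealy

/-- The degree of the `n`-th vertex on the spine: number of one-letter extensions. -/
noncomputable def dseq (M : Mealy Q A) (u : List A) (n : ℕ) : ℕ :=
  {b : A | ptake u n ++ [b] ∈ M.Lset u}.ncard

/-- All words of `Lset` at the same level have the same degree. -/
theorem ncard_ext_eq (M : Mealy Q A) (h : M.Invertible) {u w : List A}
    (hw : w ∈ M.Lset u) :
    {b : A | w ++ [b] ∈ M.Lset u}.ncard = M.dseq u w.length := by
  obtain ⟨s, hs⟩ := hw
  set n := w.length with hn
  set t := M.stW s (ptake u n) with ht
  set g : A → A := fun b => (M.actW t [b]).getD 0 (Classical.arbitrary A) with hg'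
  have hg : ∀ b, M.actW t [b] = [g b] := by
    intro b
    have hl : (M.actW t [b]).length = 1 := by rw [length_actW]; rfl
    obtain ⟨a, ha⟩ := List.length_eq_one_iff.mp hl
    rw [ha]
    simp [hg', ha]
  have hginj : Function.Injective g := by
    intro b b' e
    have : M.actW t [b] = M.actW t [b'] := by rw [hg, hg, e]
    simpa using M.actW_injective h t this
  have himg : {b : A | w ++ [b] ∈ M.Lset u}
      = g '' {b : A | ptake u n ++ [b] ∈ M.Lset u} := by
    ext b
    constructor
    · intro hb
      have hmem : ([b] : List A) ∈ M.Fol u w := hb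
      rw [hs, M.fol_translate h u s n] at hmem
      obtain ⟨x', hx', he⟩ := hmem
      have hx'l : x'.length = 1 := by
        have := M.length_actW t x'
        rw [he] at this
        simpa using this.symm
      obtain ⟨b', rfl⟩ := List.length_eq_one_iff.mp hx'l
      refine ⟨b', hx', ?_⟩
      rw [hg] at he
      simpa using he
    · rintro ⟨b', hb', rfl⟩
      show w ++ [g b'] ∈ M.Lset u
      have : M.actW t [b'] ∈ M.actW t '' M.Fol u (ptake u n) := ⟨[b'], hb', rfl⟩
      rw [← M.fol_translate h u s n, ← hs] at this
      rw [← hg]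
      exact this
  rw [himg, Set.ncard_image_of_injective _ hginj]
  rfl

theorem dseq_le (M : Mealy Q A) (u : List A) (n : ℕ) :
    M.dseq u (n + u.length) ≤ M.dseq u n := by
  apply Set.ncard_le_ncard _ (Set.toFinite _)
  intro b hb
  exact M.fol_step_subset u n hb

/-- Eventual periodic stabilisation of the degree sequence. -/
theorem exists_dseq_stab (M : Mealy Q A) (u : List A) (hu : u ≠ []) :
    ∃ n₁ : ℕ, ∀ n, n₁ ≤ n → M.dseq u (n + u.length) = M.dseq u n := by
  set dl := u.length with hdl
  have hdl0 : 0 < dl := List.length_pos_iff.mpr hu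
  set g : ℕ → ℕ := fun k => ∑ r ∈ Finset.range dl, M.dseq u (k * dl + r) with hg
  have hstep : ∀ k, g (k + 1) ≤ g k := by
    intro k
    apply Finset.sum_le_sum
    intro r _
    rw [show (k + 1) * dl + r = k * dl + r + dl by ring]
    exact M.dseq_le u (k * dl + r)
  have hanti : ∀ i k, g (k + i) ≤ g k := by
    intro i
    induction i with
    | zero => exact fun k => le_refl _
    | succ i ih =>
      intro k
      calc g (k + (i + 1)) = g ((k + i) + 1) := by ring_nf
        _ ≤ g (k + i) := hstep _
        _ ≤ g k := ih k
  obtain ⟨K, hK⟩ : ∃ K, g K = sInf (Set.range g) := by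
    have := Nat.sInf_mem (Set.range_nonempty g)
    obtain ⟨K, hK⟩ := this
    exact ⟨K, hK⟩
  have hconst : ∀ k, K ≤ k → g k = g K := by
    intro k hk
    have h1 : g k ≤ g K := by
      have := hanti (k - K) K
      rwa [show K + (k - K) = k by omega] at this
    have h2 : g K ≤ g k := by
      rw [hK]
      exact Nat.sInf_le ⟨k, rfl⟩
    omega
  refine ⟨K * dl, fun n hn => ?_⟩
  set q := n / dl with hq
  set r := n % dl with hr
  have hqr : n = q * dl + r := by
    rw [hq, hr, Nat.mul_comm]
    exact (Nat.div_add_mod n dl).symm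
  have hqK : K ≤ q := by
    rw [hq]
    exact (Nat.le_div_iff_mul_le hdl0).mpr hn
  have hrlt : r < dl := Nat.mod_lt _ hdl0
  by_contra hne
  have hlt : M.dseq u (n + dl) < M.dseq u n :=
    lt_of_le_of_ne (M.dseq_le u n) hne
  have hglt : g (q + 1) < g q := by
    apply Finset.sum_lt_sum
    · intro i _
      rw [show (q + 1) * dl + i = q * dl + i + dl by ring]
      exact M.dseq_le u (q * dl + i)
    · refine ⟨r, Finset.mem_range.mpr hrlt, ?_⟩
      rw [show (q + 1) * dl + r = (q * dl + r) + dl by ring, ← hqr]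
      exact hlt
  have e1 : g (q + 1) = g K := hconst _ (by omega)
  have e2 : g q = g K := hconst _ hqK
  omega

/-- Once the degrees stabilise, the follower sets along the spine stabilise. -/
theorem fol_stab (M : Mealy Q A) (h : M.Invertible) (u : List A) (hu : u ≠ [])
    {n₁ : ℕ} (hstab : ∀ n, n₁ ≤ n → M.dseq u (n + u.length) = M.dseq u n) :
    ∀ n, n₁ ≤ n → M.Fol u (ptake u (n + u.length)) = M.Fol u (ptake u n) := by
  have main : ∀ (m : ℕ) (x : List A), x.length = m → ∀ n, n₁ ≤ n →
      (ptake u n ++ x ∈ M.Lset u → ptake u (n + u.length) ++ x ∈ M.Lset u) := by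
    intro m
    induction m with
    | zero =>
      intro x hx n hn _
      rw [List.length_eq_zero_iff.mp hx, List.append_nil]
      exact M.ptake_mem u _
    | succ m ih =>
      intro x hx n hn hmem
      have hxne : x ≠ [] := by
        intro hxe
        rw [hxe] at hx
        simp at hx
      have hdx : x.dropLast ++ [x.getLast hxne] = x := List.dropLast_append_getLast hxne
      set x₀ := x.dropLast with hx₀def
      set b := x.getLast hxne with hbdef
      have hx₀ : x₀.length = m := by
        rw [hx₀def, List.length_dropLast, hx]
        omega
      have h₀n : ptake u n ++ x₀ ∈ M.Lset u := by
        apply M.Lset_prefix (x := [b])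
        rw [List.append_assoc, hdx]
        exact hmem
      have h₀n' : ptake u (n + u.length) ++ x₀ ∈ M.Lset u := ih x₀ hx₀ n hn h₀n
      set B₁ := {b' : A | (ptake u (n + u.length) ++ x₀) ++ [b'] ∈ M.Lset u} with hB₁
      set B₂ := {b' : A | (ptake u n ++ x₀) ++ [b'] ∈ M.Lset u} with hB₂
      have hsub : B₁ ⊆ B₂ := by
        intro b' hb'
        show (ptake u n ++ x₀) ++ [b'] ∈ M.Lset u
        rw [List.append_assoc]
        apply M.fol_step_subset u n
        show ptake u (n + u.length) ++ (x₀ ++ [b']) ∈ M.Lset u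
        rw [← List.append_assoc]
        exact hb'
      have hc₁ : B₁.ncard = M.dseq u (n + u.length + m) := by
        rw [hB₁, M.ncard_ext_eq h h₀n']
        congr 1
        simp [hx₀]
      have hc₂ : B₂.ncard = M.dseq u (n + m) := by
        rw [hB₂, M.ncard_ext_eq h h₀n]
        congr 1
        simp [hx₀]
      have hd : M.dseq u (n + u.length + m) = M.dseq u (n + m) := by
        rw [show n + u.length + m = (n + m) + u.length by ring]
        exact hstab (n + m) (by omega)
      have hBeq : B₁ = B₂ :=
        Set.eq_of_subset_of_ncard_le hsub (by omega) (Set.toFinite _)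
      have hb₂ : b ∈ B₂ := by
        show (ptake u n ++ x₀) ++ [b] ∈ M.Lset u
        rw [List.append_assoc, hdx]
        exact hmem
      have hb₁ : b ∈ B₁ := by rw [hBeq]; exact hb₂
      show ptake u (n + u.length) ++ x ∈ M.Lset u
      rw [← hdx, ← List.append_assoc]
      exact hb₁
  intro n hn
  apply Set.eq_of_subset_of_subset (M.fol_step_subset u n)
  intro x hx
  exact main x.length x rfl n hn hx

end Mealy

end Stmt16Aux3
section Stmt16Aux4

variable {Q A : Type*} [Fintype A] [Nonempty A]

namespace Mealy

theorem fol_snoc (M : Mealy Q A) (u w : List A) (b : A) :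
    M.Fol u (w ++ [b]) = {x | b :: x ∈ M.Fol u w} := by
  ext x
  show (w ++ [b]) ++ x ∈ M.Lset u ↔ w ++ (b :: x) ∈ M.Lset u
  rw [List.append_assoc, List.singleton_append]

theorem fol_classify (M : Mealy Q A) (h : M.Invertible) (u : List A)
    {n₁ : ℕ} (hstab : ∀ n, n₁ ≤ n → M.dseq u (n + u.length) = M.dseq u n)
    (hu : u ≠ []) :
    ∀ w : List A, M.Fol u w = ∅ ∨
      ∃ v : List A, v.length < n₁ + u.length ∧ M.Fol u w = M.Fol u v := by
  have hdl0 : 0 < u.length := List.length_pos_iff.mpr hu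
  suffices H : ∀ (n : ℕ) (w : List A), w.length = n → (M.Fol u w = ∅ ∨
      ∃ v : List A, v.length < n₁ + u.length ∧ M.Fol u w = M.Fol u v) by
    exact fun w => H w.length w rfl
  intro n
  induction n using Nat.strong_induction_on with
  | _ n ih =>
    intro w hw
    by_cases hwL : w ∈ M.Lset u
    · by_cases hn2 : n < n₁ + u.length
      · exact Or.inr ⟨w, by omega, rfl⟩
      · obtain ⟨s, hs⟩ := hwL
        rw [hw] at hs
        set n' := n - u.length with hn'
        have hn'1 : n₁ ≤ n' := by omega
        have hnn' : n = u.length + n' := by omega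
        have h1 : ptake u n = u ++ ptake u n' := by
          rw [hnn', ptake_block]
        have key1 : M.stW s (ptake u n) = M.stW (M.stW s u) (ptake u n') := by
          rw [h1, stW_append]
        have key2 : M.Fol u (ptake u n) = M.Fol u (ptake u n') := by
          rw [show n = n' + u.length by omega]
          exact M.fol_stab h u hu hstab n' hn'1
        have chain : M.Fol u w = M.Fol u (M.actW (M.stW s u) (ptake u n')) := by
          rw [hs, M.fol_translate h u s n, key1, key2,
            M.fol_translate h u (M.stW s u) n']
        have hlen' : (M.actW (M.stW s u) (ptake u n')).length = n' := by
          rw [length_actW, length_ptake]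
        rcases ih n' (by omega) _ hlen' with h0 | ⟨v, hv, he⟩
        · exact Or.inl (chain.trans h0)
        · exact Or.inr ⟨v, hv, chain.trans he⟩
    · left
      ext x
      simp only [Set.mem_empty_iff_false, iff_false]
      intro hx
      exact hwL (M.Lset_prefix hx)

theorem Lset_regular (M : Mealy Q A) (h : M.Invertible) (u : List A) (hu : u ≠ []) :
    IsRegular (M.Lset u) := by
  classical
  obtain ⟨n₁, hstab⟩ := M.exists_dseq_stab u hu
  have hclass := M.fol_classify h u hstab hu
  have hfin : (Set.range (M.Fol u)).Finite := by
    apply Set.Finite.subset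
      (Set.Finite.insert ∅ ((List.finite_length_lt A (n₁ + u.length)).image (M.Fol u)))
    rintro S ⟨w, rfl⟩
    rcases hclass w with h0 | ⟨v, hv, he⟩
    · rw [h0]; exact Set.mem_insert _ _
    · exact Set.mem_insert_of_mem _ ⟨v, hv, he.symm⟩
  haveI hftype : Fintype ↥(Set.range (M.Fol u)) := hfin.fintype
  set T := ↥(Set.range (M.Fol u)) with hT
  set e : T ≃ Fin (Fintype.card T) := Fintype.equivFin T with he
  have hderiv : ∀ (S : Set (List A)), S ∈ Set.range (M.Fol u) → ∀ b : A,
      {x | b :: x ∈ S} ∈ Set.range (M.Fol u) := by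
    rintro S ⟨w, rfl⟩ b
    exact ⟨w ++ [b], M.fol_snoc u w b⟩
  set dfa : DFA A (Fin (Fintype.card T)) :=
    { step := fun i b => e ⟨{x | b :: x ∈ (e.symm i).1}, hderiv _ (e.symm i).2 b⟩
      start := e ⟨M.Fol u [], ⟨[], rfl⟩⟩
      accept := {i | ([] : List A) ∈ (e.symm i).1} } with hdfa
  have heval : ∀ w : List A, (e.symm (dfa.eval w)).1 = M.Fol u w := by
    intro w
    induction w using List.reverseRecOn with
    | nil =>
      show (e.symm dfa.start).1 = _
      rw [hdfa]
      simp
    | append_singleton w b ihw =>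
      rw [DFA.eval_append_singleton]
      show (e.symm (e _)).1 = _
      rw [Equiv.symm_apply_apply]
      show {x | b :: x ∈ (e.symm (dfa.eval w)).1} = _
      rw [ihw, M.fol_snoc u w b]
  refine ⟨Fin (Fintype.card T), inferInstance, dfa, fun w => ?_⟩
  rw [DFA.mem_accepts]
  show dfa.eval w ∈ dfa.accept ↔ _
  constructor
  · intro hacc
    have : ([] : List A) ∈ (e.symm (dfa.eval w)).1 := hacc
    rw [heval w] at this
    have : w ++ [] ∈ M.Lset u := this
    rwa [List.append_nil] at this
  · intro hw
    show ([] : List A) ∈ (e.symm (dfa.eval w)).1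
    rw [heval w]
    show w ++ [] ∈ M.Lset u
    rwa [List.append_nil]

end Mealy

end Stmt16Aux4

/-- For an invertible Mealy automaton `M` and a nonempty word `u ∈ A*`,
the set of all finite prefixes of sequences in the orbit `P_M · u^ω` is a regular language. -/
theorem stmt16 {Q A : Type*} [Fintype Q] [Nonempty Q] [Fintype A] [Nonempty A]
    (M : Mealy Q A) (hinv : M.Invertible) (u : List A) (hu : u ≠ []) :
    IsRegular {w : List A | ∃ s : List Q,
      w = seqTake (M.actSeq s (periodic u)) w.length} := by
  have hset : {w : List A | ∃ s : List Q,
      w = seqTake (M.actSeq s (periodic u)) w.length} = M.Lset u := by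
    ext w
    simp only [Mealy.Lset, ptake, Set.mem_setOf_eq, Mealy.seqTake_actSeq]
  rw [hset]
  exact M.Lset_regular hinv u hu

end AutGrp
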